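/- Let N ≥ 1, let A be a nonempty bounded subset of ℝ^N, let δ > 0 and let λ > 0. Then dim̄_B(λA) = dim̄_B A, and for every s ∈ ℂ with Re s > dim̄_B A the distance zeta function satisfies the scaling identity ∫_{(λA)_{λδ}} d(x, λA)^{s−N} dx = λ^s ∫_{A_δ} d(x,A)^{s−N} dx, where λA = {λa : a ∈ A} (note that λ(A_δ) = (λA)_{λδ}). -/

import Mathlib

open MeasureTheory Metric Filter Set
open scoped ENNReal Topology Pointwise

/-- The upper `r`-dimensional Minkowski content of a subset of `ℝ^N`. -/
noncomputable def upperMink (N : ℕ) (A : Set (EuclideanSpace ℝ (Fin N))) (r : ℝ) : ℝ≥0∞ :=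
  Filter.limsup (fun t : ℝ => volume (thickening t A) / ENNReal.ofReal (t ^ ((N : ℝ) - r)))
    (𝓝[>] (0 : ℝ))

/-- The upper box (Minkowski) dimension of a subset of `ℝ^N`. -/
noncomputable def upperBoxDim (N : ℕ) (A : Set (EuclideanSpace ℝ (Fin N))) : ℝ :=
  sInf {r : ℝ | 0 < r ∧ upperMink N A r = 0}

lemma thickening_smul_set {E : Type*} [NormedAddCommGroup E] [NormedSpace ℝ E]
    {c : ℝ} (hc : 0 < c) (t : ℝ) (A : Set E) :
    thickening (c * t) (c • A) = c • thickening t A := by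
  ext x
  rw [Set.mem_smul_set_iff_inv_smul_mem₀ hc.ne']
  simp only [Metric.mem_thickening_iff_infEdist_lt]
  have hx : infEDist x (c • A) = ‖c‖₊ • infEDist (c⁻¹ • x) A := by
    conv_lhs => rw [← smul_inv_smul₀ hc.ne' x]
    exact infEdist_smul₀ hc.ne' A _
  have h1 : ((‖c‖₊ : ℝ≥0∞)) = ENNReal.ofReal c := Real.enorm_eq_ofReal hc.le
  rw [hx, ENNReal.smul_def, smul_eq_mul, h1, ENNReal.ofReal_mul hc.le]
  exact (ENNReal.mul_lt_mul_iff_right (by simp [hc.ne', hc.le, hc]) ENNReal.ofReal_ne_top)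

lemma map_mul_nhdsWithin_Ioi {c : ℝ} (hc : 0 < c) :
    Filter.map (fun u : ℝ => c * u) (𝓝[>] (0 : ℝ)) = 𝓝[>] (0 : ℝ) := by
  have h := (Homeomorph.mulLeft₀ c hc.ne').isEmbedding.map_nhdsWithin_eq (Set.Ioi 0) 0
  have hco : ⇑(Homeomorph.mulLeft₀ c hc.ne') = (fun u : ℝ => c * u) :=
    Homeomorph.coe_mulLeft₀ c hc.ne'
  rw [hco] at h
  have himg : (fun u : ℝ => c * u) '' Set.Ioi 0 = Set.Ioi 0 := by
    ext y
    constructor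
    · rintro ⟨u, hu, rfl⟩
      exact mul_pos hc hu
    · intro hy
      exact ⟨y / c, div_pos hy hc, by field_simp⟩
  simpa [himg] using h

lemma upperMink_smul (N : ℕ) (A : Set (EuclideanSpace ℝ (Fin N))) {c : ℝ} (hc : 0 < c)
    (r : ℝ) : upperMink N (c • A) r = ENNReal.ofReal (c ^ r) * upperMink N A r := by
  set g : ℝ → ℝ≥0∞ := fun t =>
    volume (thickening t (c • A)) / ENNReal.ofReal (t ^ ((N : ℝ) - r)) with hg
  set f : ℝ → ℝ≥0∞ := fun t =>
    volume (thickening t A) / ENNReal.ofReal (t ^ ((N : ℝ) - r)) with hf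
  have hcomp : ∀ᶠ u in 𝓝[>] (0 : ℝ),
      (g ∘ fun u => c * u) u = ENNReal.ofReal (c ^ r) * f u := by
    filter_upwards [self_mem_nhdsWithin] with u hu
    have hu : (0 : ℝ) < u := hu
    have hvol : volume (thickening (c * u) (c • A))
        = ENNReal.ofReal (c ^ ((N : ℝ) - r)) *
          (ENNReal.ofReal (c ^ r) * volume (thickening u A)) := by
      have hsc : ENNReal.ofReal (c ^ N) =
          ENNReal.ofReal (c ^ ((N : ℝ) - r)) * ENNReal.ofReal (c ^ r) := by
        rw [← ENNReal.ofReal_mul (by positivity), ← Real.rpow_add hc, sub_add_cancel,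
          Real.rpow_natCast]
      rw [thickening_smul_set hc u A,
        MeasureTheory.Measure.addHaar_smul_of_nonneg volume hc.le (thickening u A),
        finrank_euclideanSpace_fin, hsc, mul_assoc]
    have hden : ENNReal.ofReal ((c * u) ^ ((N : ℝ) - r))
        = ENNReal.ofReal (c ^ ((N : ℝ) - r)) * ENNReal.ofReal (u ^ ((N : ℝ) - r)) := by
      rw [Real.mul_rpow hc.le hu.le, ENNReal.ofReal_mul (by positivity)]
    simp only [Function.comp_apply, hg, hf]
    rw [hvol, hden,
      ENNReal.mul_div_mul_left _ _ (by positivity) ENNReal.ofReal_ne_top,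
      mul_div_assoc]
  have : upperMink N (c • A) r = Filter.limsup (g ∘ fun u => c * u) (𝓝[>] (0 : ℝ)) := by
    rw [upperMink, limsup_comp, map_mul_nhdsWithin_Ioi hc]
  rw [this, Filter.limsup_congr hcomp,
    ENNReal.limsup_const_mul_of_ne_top ENNReal.ofReal_ne_top]
  rfl

/-- scaling property of the distance zeta function:
`dim̄_B (λA) = dim̄_B A` and for `Re s > dim̄_B A`,
`∫_{(λA)_{λδ}} d(x, λA)^{s−N} dx = λ^s ∫_{A_δ} d(x,A)^{s−N} dx`. -/
theorem stmt3 (N : ℕ) (hN : 1 ≤ N) (A : Set (EuclideanSpace ℝ (Fin N)))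
    (hA : A.Nonempty) (hb : Bornology.IsBounded A) (δ : ℝ) (hδ : 0 < δ)
    (c : ℝ) (hc : 0 < c) :
    upperBoxDim N (c • A) = upperBoxDim N A ∧
    ∀ s : ℂ, upperBoxDim N A < s.re →
      ∫ x in thickening (c * δ) (c • A), (Metric.infDist x (c • A) : ℂ) ^ (s - (N : ℂ)) =
        (c : ℂ) ^ s * ∫ x in thickening δ A, (Metric.infDist x A : ℂ) ^ (s - (N : ℂ)) := by
  constructor
  · unfold upperBoxDim
    congr 1
    ext r
    simp only [Set.mem_setOf_eq, upperMink_smul N A hc r]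
    have hpos : ENNReal.ofReal (c ^ r) ≠ 0 := by
      simp [ENNReal.ofReal_eq_zero, not_le]
      positivity
    constructor
    · rintro ⟨hr, h⟩
      refine ⟨hr, ?_⟩
      rcases mul_eq_zero.1 h with h' | h'
      · exact absurd h' hpos
      · exact h'
    · rintro ⟨hr, h⟩
      exact ⟨hr, by rw [h, mul_zero]⟩
  · intro s _
    set f : EuclideanSpace ℝ (Fin N) → ℂ :=
      fun x => (Metric.infDist x (c • A) : ℂ) ^ (s - (N : ℂ)) with hfdef
    set T := thickening δ A with hT
    rw [thickening_smul_set hc δ A]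
    have h := MeasureTheory.Measure.setIntegral_comp_smul volume f T hc.ne'
    rw [finrank_euclideanSpace_fin] at h
    have habs : |((c : ℝ) ^ N)⁻¹| = ((c : ℝ) ^ N)⁻¹ := by
      rw [abs_of_pos]; positivity
    rw [habs] at h
    have hLHS : ∫ x in c • T, f x = (c ^ N : ℝ) • ∫ x in T, f (c • x) := by
      rw [h, smul_smul, mul_inv_cancel₀ (by positivity), one_smul]
    rw [hLHS]
    have hint : ∀ x, f (c • x) =
        ((c : ℂ) ^ (s - (N : ℂ))) * (Metric.infDist x A : ℂ) ^ (s - (N : ℂ)) := by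
      intro x
      have h1 : Metric.infDist (c • x) (c • A) = c * Metric.infDist x A := by
        rw [infDist_smul₀ hc.ne' A x, Real.norm_eq_abs, abs_of_pos hc]
      simp only [hfdef, h1]
      rw [Complex.ofReal_mul]
      exact Complex.mul_cpow_ofReal_nonneg hc.le Metric.infDist_nonneg _
    simp only [hint]
    rw [MeasureTheory.integral_const_mul]
    rw [Complex.real_smul, ← mul_assoc]
    congr 1
    show ((c ^ N : ℝ) : ℂ) * (c : ℂ) ^ (s - (N : ℂ)) = (c : ℂ) ^ s
    have hc0 : (c : ℂ) ≠ 0 := by exact_mod_cast hc.ne'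
    rw [show ((c ^ N : ℝ) : ℂ) = (c : ℂ) ^ (N : ℂ) by push_cast; rw [Complex.cpow_natCast],
      ← Complex.cpow_add _ _ hc0]
    congr 1
    ring
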